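/- arXiv:1510.03888 — 3 statements merged into one kernel-verified Lean document; each statement's English description precedes it below -/
import Mathlib

section
/- With notation as above (U = (1/R)[[z,−w̄],[w,z̄]] unitary, z₀ = R(1−ε²)e^{−iφ/2}, ε ∈ (0,1)), the condition ρ(R_z(φ), U) ≤ ε, where ρ(A,B) = √(1 − |tr(AB†)|/2), holds if and only if Re((z−z₀)e^{iφ/2}) ≥ 0 or Re((z+z₀)e^{iφ/2}) ≤ 0. -/
open Matrix Complex

noncomputable section

/-- The global-phase-insensitive distance `ρ(A,B) = √(1 − |tr(AB†)|/2)`. -/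
def rhoDist (A B : Matrix (Fin 2) (Fin 2) ℂ) : ℝ :=
  Real.sqrt (1 - ‖(A * Bᴴ).trace‖ / 2)

/-- The rotation `R_z(φ) = diag(e^{−iφ/2}, e^{iφ/2})`. -/
def Rz (φ : ℝ) : Matrix (Fin 2) (Fin 2) ℂ :=
  !![Complex.exp (-(φ / 2 : ℝ) * Complex.I), 0; 0, Complex.exp ((φ / 2 : ℝ) * Complex.I)]

lemma trace_helper (R φ : ℝ) (z w : ℂ) :
    (!![Complex.exp (-(φ / 2 : ℝ) * Complex.I), 0; 0, Complex.exp ((φ / 2 : ℝ) * Complex.I)] *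
      (((R : ℂ))⁻¹ • !![z, -(starRingEnd ℂ) w; w, (starRingEnd ℂ) z])ᴴ).trace
    = ((R : ℂ))⁻¹ * ((starRingEnd ℂ) (z * Complex.exp ((φ / 2 : ℝ) * Complex.I))
        + z * Complex.exp ((φ / 2 : ℝ) * Complex.I)) := by
  rw [Matrix.trace_fin_two]
  simp [Matrix.mul_apply, Fin.sum_univ_two, Complex.conj_ofReal, map_inv₀, _root_.map_mul,
    ← Complex.exp_conj, Complex.conj_I, map_ofNat, map_div₀]
  ring_nf

/-- with `U = (1/R)[[z,−w̄],[w,z̄]]`, `z₀ = R(1−ε²)e^{−iφ/2}`, `ε ∈ (0,1)`,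
we have `ρ(R_z(φ),U) ≤ ε ↔ Re((z−z₀)e^{iφ/2}) ≥ 0 ∨ Re((z+z₀)e^{iφ/2}) ≤ 0`. -/
theorem stmt6 (R φ ε : ℝ) (hR : 0 < R) (hε : ε ∈ Set.Ioo (0 : ℝ) 1)
    (z w : ℂ) (hzw : ‖z‖ ^ 2 + ‖w‖ ^ 2 = R ^ 2)
    (U : Matrix (Fin 2) (Fin 2) ℂ)
    (hU : U = ((R : ℂ))⁻¹ • !![z, -(starRingEnd ℂ) w; w, (starRingEnd ℂ) z])
    (z₀ : ℂ) (hz₀ : z₀ = (R : ℂ) * (1 - (ε : ℂ) ^ 2) * Complex.exp (-(φ / 2 : ℝ) * Complex.I)) :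
    rhoDist (Rz φ) U ≤ ε ↔
      0 ≤ ((z - z₀) * Complex.exp ((φ / 2 : ℝ) * Complex.I)).re
        ∨ ((z + z₀) * Complex.exp ((φ / 2 : ℝ) * Complex.I)).re ≤ 0 := by
  obtain ⟨hε0, hε1⟩ := hε
  set e : ℂ := Complex.exp ((φ / 2 : ℝ) * Complex.I) with he_def
  have hconj : Complex.exp (-(φ / 2 : ℝ) * Complex.I) = (starRingEnd ℂ) e := by
    rw [he_def, ← Complex.exp_conj, _root_.map_mul, Complex.conj_ofReal, Complex.conj_I]
    congr 1
    ring
  set x : ℝ := (z * e).re with hx_def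
  have htr : (Rz φ * Uᴴ).trace = ((R : ℂ))⁻¹ * ((starRingEnd ℂ) (z * e) + z * e) := by
    subst hU
    exact trace_helper R φ z w
  have hsum : (starRingEnd ℂ) (z * e) + z * e = ((2 * x : ℝ) : ℂ) := by
    rw [add_comm, Complex.add_conj]
  have habs : ‖(Rz φ * Uᴴ).trace‖ = 2 * |x| / R := by
    rw [htr, hsum]
    rw [norm_mul, norm_inv, Complex.norm_real, Complex.norm_real, Real.norm_eq_abs, Real.norm_eq_abs, abs_of_pos hR,
      abs_mul, abs_of_pos (by norm_num : (0:ℝ) < 2)]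
    field_simp
  have hz₀e : z₀ * e = ((R * (1 - ε ^ 2) : ℝ) : ℂ) := by
    rw [hz₀, mul_assoc, ← Complex.exp_add,
      show -(↑(φ / 2 : ℝ) : ℂ) * I + (↑(φ / 2 : ℝ) : ℂ) * I = 0 by ring,
      Complex.exp_zero, mul_one]
    push_cast
    ring
  have h1 : ((z - z₀) * e).re = x - R * (1 - ε ^ 2) := by
    rw [sub_mul, hz₀e, Complex.sub_re, Complex.ofReal_re]
  have h2 : ((z + z₀) * e).re = x + R * (1 - ε ^ 2) := by
    rw [add_mul, hz₀e, Complex.add_re, Complex.ofReal_re]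
  rw [show rhoDist (Rz φ) U = Real.sqrt (1 - |x| / R) by
      rw [rhoDist, habs]; ring_nf]
  rw [Real.sqrt_le_left hε0.le, h1, h2]
  have hdiv : |x| / R * R = |x| := div_mul_cancel₀ _ hR.ne'
  constructor
  · intro h
    have hkey : R * (1 - ε ^ 2) ≤ |x| := by nlinarith
    rcases le_abs.mp hkey with h' | h'
    · left; linarith
    · right; linarith
  · intro h
    have hkey : R * (1 - ε ^ 2) ≤ |x| := by
      apply le_abs.mpr
      rcases h with h' | h'
      · left; linarith
      · right; linarith
    have : 0 ≤ |x| / R := div_nonneg (abs_nonneg x) hR.le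
    nlinarith
end
end

section
/- Let K be a CM field of degree 2d over ℚ and let I = ξ·O_K be a nonzero principal ideal of O_K. Suppose v ∈ I is a nonzero element whose Euclidean length under the Minkowski embedding satisfies ‖v‖ ≤ (4/3)^{(2d−1)/4}·vol(I)^{1/(2d)} (e.g. the first vector of an LLL-reduced basis of I). Write v = η·ξ with η ∈ O_K. Then N_{K/ℚ}(η) ≤ ((1/(2d))·(4/3)^{(2d−1)/2})^d · vol(O_K). In particular the cofactor norm is bounded by a constant C_K depending only on K. -/
open scoped NumberField

lemma agm_aux {d : ℕ} (hd : 0 < d) (x : Fin d → ℝ) (hx : ∀ i, 0 ≤ x i) :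
    ∏ i, x i ≤ ((∑ i, x i) / d) ^ d := by
  have hd' : (0:ℝ) < d := Nat.cast_pos.mpr hd
  have h := Real.geom_mean_le_arith_mean_weighted Finset.univ (fun _ => 1 / (d:ℝ)) x
    (fun i _ => by positivity)
    (by simp [Finset.card_univ]; field_simp)
    (fun i _ => hx i)
  have hprod : ∏ i, x i ^ (1 / (d:ℝ)) = (∏ i, x i) ^ (1 / (d:ℝ)) :=
    Real.finset_prod_rpow _ _ (fun i _ => hx i) _
  have hsum : ∑ i, (1 / (d:ℝ)) * x i = (∑ i, x i) / d := by
    rw [← Finset.mul_sum]; ring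
  rw [hprod, hsum] at h
  have hP : (0:ℝ) ≤ ∏ i, x i := Finset.prod_nonneg fun i _ => hx i
  have := pow_le_pow_left₀ (by positivity) h d
  rwa [← Real.rpow_natCast ((∏ i, x i) ^ (1/(d:ℝ))) d, ← Real.rpow_mul hP,
    one_div, inv_mul_cancel₀ (ne_of_gt hd'), Real.rpow_one] at this

/-- let `K` be a CM field of degree `2d`, `I = ξ·O_K` a nonzero principal
ideal, and let `v = η·ξ ∈ I` be a nonzero element whose Euclidean length
`‖v‖ = √(Tr_{K/ℚ}(v v*)) = √(2∑_i |σ_i(v)|²)` satisfies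
`‖v‖ ≤ (4/3)^{(2d−1)/4}·vol(I)^{1/(2d)}` (e.g. the first LLL-basis vector of `I`),
where `vol(I) = N_{K/ℚ}(ξ)·vol(O_K)`.  Then
`N_{K/ℚ}(η) ≤ ((1/(2d))·(4/3)^{(2d−1)/2})^d · vol(O_K)`, a constant depending only on `K`. -/
theorem stmt10 (K : Type*) [Field K] [NumberField K] (d : ℕ) (hd : 0 < d)
    (hdeg : Module.finrank ℚ K = 2 * d)
    (σ : Fin d → (K →+* ℂ)) (hσ : Function.Injective σ)
    (hconj : ∀ i j, (starRingEnd ℂ).comp (σ i : K →+* ℂ) ≠ σ j)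
    (ξ η v : 𝓞 K) (hξ : ξ ≠ 0) (hv0 : v ≠ 0) (hv : v = η * ξ)
    (volOK volI : ℝ) (hvolOK : 0 < volOK)
    (hvolI : volI = (∏ i, Complex.normSq (σ i (algebraMap (𝓞 K) K ξ))) * volOK)
    (hshort : Real.sqrt (2 * ∑ i, Complex.normSq (σ i (algebraMap (𝓞 K) K v)))
        ≤ (4 / 3 : ℝ) ^ (((2 * d : ℝ) - 1) / 4) * volI ^ ((1 : ℝ) / (2 * d))) :
    ∏ i, Complex.normSq (σ i (algebraMap (𝓞 K) K η))
      ≤ ((1 / (2 * d : ℝ)) * (4 / 3 : ℝ) ^ (((2 * d : ℝ) - 1) / 2)) ^ d * volOK := by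
  have hd' : (0:ℝ) < d := Nat.cast_pos.mpr hd
  set x : Fin d → ℝ := fun i => Complex.normSq (σ i (algebraMap (𝓞 K) K v)) with hxdef
  have hx : ∀ i, 0 ≤ x i := fun i => Complex.normSq_nonneg _
  -- ξ products positive
  have hξK : algebraMap (𝓞 K) K ξ ≠ 0 := by
    simpa using (map_ne_zero_iff _ (NumberField.RingOfIntegers.coe_injective (K := K))).mpr hξ
  have hξi : ∀ i, (0:ℝ) < Complex.normSq (σ i (algebraMap (𝓞 K) K ξ)) := fun i => by
    have : σ i (algebraMap (𝓞 K) K ξ) ≠ 0 := (map_ne_zero _).mpr hξK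
    exact Complex.normSq_pos.mpr this
  have hPξ : (0:ℝ) < ∏ i, Complex.normSq (σ i (algebraMap (𝓞 K) K ξ)) :=
    Finset.prod_pos fun i _ => hξi i
  have hvolI' : 0 < volI := by rw [hvolI]; positivity
  -- product factorization
  have hfact : ∏ i, x i = (∏ i, Complex.normSq (σ i (algebraMap (𝓞 K) K η))) *
      ∏ i, Complex.normSq (σ i (algebraMap (𝓞 K) K ξ)) := by
    rw [← Finset.prod_mul_distrib]
    refine Finset.prod_congr rfl fun i _ => ?_
    rw [hxdef]; simp [hv, map_mul, Complex.normSq_mul]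
  -- squaring hshort
  set A : ℝ := (4 / 3 : ℝ) ^ (((2 * d : ℝ) - 1) / 4) * volI ^ ((1 : ℝ) / (2 * d)) with hA
  have hA0 : 0 ≤ A := mul_nonneg (Real.rpow_nonneg (by norm_num) _) (Real.rpow_nonneg hvolI'.le _)
  have hS0 : 0 ≤ 2 * ∑ i, x i := mul_nonneg (by norm_num) (Finset.sum_nonneg fun i _ => hx i)
  have hsq : 2 * ∑ i, x i ≤ A ^ 2 := by
    have := pow_le_pow_left₀ (Real.sqrt_nonneg _) hshort 2
    rwa [Real.sq_sqrt hS0] at this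
  have hA2 : A ^ 2 = (4 / 3 : ℝ) ^ (((2 * d : ℝ) - 1) / 2) * volI ^ ((1 : ℝ) / d) := by
    rw [hA, mul_pow, ← Real.rpow_natCast ((4/3:ℝ) ^ (((2*d:ℝ)-1)/4)) 2,
      ← Real.rpow_natCast (volI ^ ((1:ℝ)/(2*d))) 2,
      ← Real.rpow_mul (by norm_num : (0:ℝ) ≤ 4/3), ← Real.rpow_mul hvolI'.le]
    norm_num
    congr 1
    · congr 1; ring
    · congr 1; field_simp
  -- AGM
  have hagm : ∏ i, x i ≤ ((∑ i, x i) / d) ^ d := agm_aux hd x hx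
  have hmean : (∑ i, x i) / d ≤ 1 / (2*d) * ((4 / 3 : ℝ) ^ (((2 * d : ℝ) - 1) / 2) * volI ^ ((1 : ℝ) / d)) := by
    rw [← hA2]
    rw [div_le_iff₀ hd']
    have heq : (1/(2*(d:ℝ)))*A^2*(d:ℝ) = A^2/2 := by field_simp
    linarith
  have hkey : ∏ i, x i ≤ ((1 / (2 * d : ℝ)) * (4 / 3 : ℝ) ^ (((2 * d : ℝ) - 1) / 2)) ^ d * volI := by
    calc ∏ i, x i ≤ ((∑ i, x i) / d) ^ d := hagm
      _ ≤ (1 / (2*d) * ((4 / 3 : ℝ) ^ (((2 * d : ℝ) - 1) / 2) * volI ^ ((1 : ℝ) / d))) ^ d := by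
          exact pow_le_pow_left₀ (div_nonneg (Finset.sum_nonneg fun i _ => hx i) hd'.le) hmean d
      _ = ((1 / (2 * d : ℝ)) * (4 / 3 : ℝ) ^ (((2 * d : ℝ) - 1) / 2)) ^ d * (volI ^ ((1:ℝ)/d)) ^ d := by
          rw [← mul_pow]; ring_nf
      _ = _ := by
          rw [← Real.rpow_natCast (volI ^ ((1:ℝ)/d)) d, ← Real.rpow_mul hvolI'.le,
            one_div_mul_cancel (ne_of_gt hd'), Real.rpow_one]
  -- divide
  rw [hfact, hvolI] at hkey
  have := (mul_le_mul_iff_of_pos_right hPξ).mp (by linarith [hkey] :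
    (∏ i, Complex.normSq (σ i (algebraMap (𝓞 K) K η))) * ∏ i, Complex.normSq (σ i (algebraMap (𝓞 K) K ξ))
      ≤ (((1 / (2 * d : ℝ)) * (4 / 3 : ℝ) ^ (((2 * d : ℝ) - 1) / 2)) ^ d * volOK) * ∏ i, Complex.normSq (σ i (algebraMap (𝓞 K) K ξ)))
  exact this
end

section
/- Let F be a totally real number field of degree d with embeddings σ₁,…,σ_d and fundamental units u₁,…,u_{d−1} of O_F. Fix δ₀ > 1 and define δ_k = δ₀·√(∏_{j=1}^{d−1} max(|σ_k(u_j)|, |σ_k(u_j)|⁻¹)) for k = 1,…,d. Then for every t ∈ ℝ^d with |∑_k t_k| < log δ₀ there exists a unit u ∈ O_F^× such that |log|σ_k(u)| − t_k| ≤ log δ_k for all k = 1,…,d. -/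
open scoped NumberField

open NumberField NumberField.Units NumberField.Units.dirichletUnitTheorem
open NumberField.InfinitePlace Finset

private lemma abs_log_eq_log_max {a : ℝ} (ha : 0 < a) :
    |Real.log a| = Real.log (max a a⁻¹) := by
  rcases le_total 1 a with h | h
  · rw [max_eq_left ((inv_le_one_of_one_le₀ h).trans h), abs_of_nonneg (Real.log_nonneg h)]
  · rw [max_eq_right (h.trans ((one_le_inv₀ ha).mpr h)), abs_of_nonpos (Real.log_nonpos ha.le h),
      Real.log_inv]

/-- let `F` be a totally real number field of degree `d` with real embeddings
`σ₁,…,σ_d` and fundamental units `u₁,…,u_{d−1}` of `O_F` (generating the unit group up to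
sign).  Fix `δ₀ > 1` and set
`δ_k = δ₀·√(∏_j max(|σ_k(u_j)|, |σ_k(u_j)|⁻¹))`.  Then for every `t ∈ ℝ^d` with
`|∑_k t_k| < log δ₀` there is a unit `u` with `|log|σ_k(u)| − t_k| ≤ log δ_k` for all `k`. -/
theorem stmt14 (F : Type*) [Field F] [NumberField F] (d : ℕ) (hd : 0 < d)
    (σ : Fin d → (F →+* ℝ)) (hdeg : Module.finrank ℚ F = d)
    (hσ : Function.Injective σ)
    (u : Fin (d - 1) → (𝓞 F)ˣ)
    (hfund : ∀ w : (𝓞 F)ˣ, ∃ n : Fin (d - 1) → ℤ,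
        w = ∏ j, (u j) ^ (n j) ∨ w = -∏ j, (u j) ^ (n j))
    (δ₀ : ℝ) (hδ₀ : 1 < δ₀) (δ : Fin d → ℝ)
    (hδ : ∀ k, δ k = δ₀ * Real.sqrt (∏ j,
        max |σ k (algebraMap (𝓞 F) F (u j))| |σ k (algebraMap (𝓞 F) F (u j))|⁻¹)) :
    ∀ t : Fin d → ℝ, |∑ k, t k| < Real.log δ₀ →
      ∃ w : (𝓞 F)ˣ, ∀ k,
        |Real.log |σ k (algebraMap (𝓞 F) F w)| - t k| ≤ Real.log (δ k) := by
  classical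
  -- Step A : counting embeddings
  have hcardC : Fintype.card (F →+* ℂ) = d := by
    rw [NumberField.Embeddings.card F ℂ, hdeg]
  set E : (F →+* ℝ) → (F →+* ℂ) := fun f => Complex.ofRealHom.comp f with hE_def
  have hE_inj : Function.Injective E := by
    intro f g h
    ext x
    exact Complex.ofReal_injective (RingHom.congr_fun h x)
  have hcardR : Fintype.card (F →+* ℝ) = d :=
    le_antisymm (hcardC ▸ Fintype.card_le_of_injective E hE_inj)
      (by simpa using Fintype.card_le_of_injective σ hσ)
  -- Step B : the infinite places
  have hE_real : ∀ f : F →+* ℝ, ComplexEmbedding.IsReal (E f) := by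
    intro f
    rw [ComplexEmbedding.isReal_iff]
    ext x
    simp [ComplexEmbedding.conjugate_coe_eq, hE_def, Complex.conj_ofReal]
  set W : Fin d → InfinitePlace F := fun k => InfinitePlace.mk (E (σ k)) with hW_def
  have hW_apply : ∀ k x, W k x = |σ k x| := by
    intro k x
    rw [hW_def]
    simp only [InfinitePlace.apply]
    simp [hE_def, Complex.norm_real]
  have hW_inj : Function.Injective W := by
    intro k k' h
    apply hσ; apply hE_inj
    rcases InfinitePlace.mk_eq_iff.mp h with h | h
    · exact h
    · rw [ComplexEmbedding.isReal_iff.mp (hE_real (σ k))] at h; exact h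
  have hcardP : Fintype.card (InfinitePlace F) = d := by
    have h1 := InfinitePlace.card_add_two_mul_card_eq_rank F
    have h2 := InfinitePlace.card_eq_nrRealPlaces_add_nrComplexPlaces F
    have h3 : d ≤ Fintype.card (InfinitePlace F) := by
      simpa using Fintype.card_le_of_injective W hW_inj
    rw [hdeg] at h1
    omega
  have hWbij : Function.Bijective W :=
    (Fintype.bijective_iff_injective_and_card W).2 ⟨hW_inj, by simp [hcardP]⟩
  set Weq : Fin d ≃ InfinitePlace F := Equiv.ofBijective W hWbij with hWeq_def
  have hmult : ∀ w : InfinitePlace F, InfinitePlace.mult w = 1 := by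
    intro w
    obtain ⟨k, rfl⟩ := hWbij.2 w
    rw [InfinitePlace.mult, if_pos]
    exact InfinitePlace.isReal_mk_iff.mpr (hE_real (σ k))
  -- nonvanishing
  have hσ_ne : ∀ k (x : (𝓞 F)ˣ), σ k (algebraMap (𝓞 F) F x) ≠ 0 := by
    intro k x h
    exact Units.coe_ne_zero x ((map_eq_zero (σ k)).mp h)
  -- the vectors of logs
  set v : Fin (d - 1) → Fin d → ℝ :=
    fun j k => Real.log |σ k (algebraMap (𝓞 F) F (u j))| with hv_def
  -- Step C : sum of logs of a unit is zero
  have hlogsum : ∀ x : (𝓞 F)ˣ, ∑ k, Real.log |σ k (algebraMap (𝓞 F) F x)| = 0 := by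
    intro x
    have h := prod_eq_abs_norm (algebraMap (𝓞 F) F (x : 𝓞 F))
    rw [show (algebraMap (𝓞 F) F (x : 𝓞 F)) = ((x : 𝓞 F) : F) from rfl] at h
    rw [NumberField.Units.norm, Rat.cast_one] at h
    have hprod : ∏ k, |σ k (algebraMap (𝓞 F) F x)| = 1 := by
      have heq : ∏ k, |σ k (algebraMap (𝓞 F) F x)|
          = ∏ w : InfinitePlace F, w ((x : 𝓞 F) : F) := by
        refine Fintype.prod_equiv Weq _ _ fun k => ?_
        rw [show Weq k = W k from rfl, hW_apply]
      rw [heq, ← h]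
      refine Finset.prod_congr rfl fun w _ => ?_
      rw [hmult w, pow_one]
    have hlog := Real.log_prod (s := Finset.univ)
      (f := fun k => |σ k (algebraMap (𝓞 F) F x)|) (fun k _ => abs_ne_zero.mpr (hσ_ne k x))
    rw [hprod, Real.log_one] at hlog
    exact hlog.symm
  have hvsum : ∀ j, ∑ k, v j k = 0 := fun j => hlogsum (u j)
  -- Step D : logs of powers/products
  have key : ∀ k (n : Fin (d - 1) → ℤ),
      σ k (algebraMap (𝓞 F) F ((∏ j, u j ^ n j : (𝓞 F)ˣ) : 𝓞 F)) =
      ∏ j, (σ k (algebraMap (𝓞 F) F (u j))) ^ (n j) := by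
    intro k n
    let ψ : (𝓞 F)ˣ →* ℝˣ := Units.map ((σ k).comp (algebraMap (𝓞 F) F)).toMonoidHom
    have h1 : σ k (algebraMap (𝓞 F) F ((∏ j, u j ^ n j : (𝓞 F)ˣ) : 𝓞 F))
        = ((ψ (∏ j, u j ^ n j) : ℝˣ) : ℝ) := rfl
    rw [h1, map_prod]
    rw [← Units.coeHom_apply, map_prod]
    refine Finset.prod_congr rfl fun j _ => ?_
    rw [Units.coeHom_apply, map_zpow, Units.val_zpow_eq_zpow_val]
    rfl
  have L1 : ∀ k (n : Fin (d - 1) → ℤ),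
      Real.log |σ k (algebraMap (𝓞 F) F ((∏ j, u j ^ n j : (𝓞 F)ˣ) : 𝓞 F))| =
      ∑ j, (n j : ℝ) * v j k := by
    intro k n
    have habs_zpow : ∀ (a : ℝ) (m : ℤ), |a ^ m| = |a| ^ m := fun a m => map_zpow₀ absHom a m
    rw [key k n, Finset.abs_prod]
    simp_rw [habs_zpow]
    rw [Real.log_prod
      (fun j _ => zpow_ne_zero _ (abs_ne_zero.mpr (hσ_ne k (u j))))]
    refine Finset.sum_congr rfl fun j _ => ?_
    rw [Real.log_zpow]
  -- Step E : components of the log embedding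
  have hcomp0 : ∀ (y : (𝓞 F)ˣ) (w : {w : InfinitePlace F // w ≠ w₀}),
      logEmbedding F (Additive.ofMul y) w
        = Real.log |σ (Weq.symm w.1) (algebraMap (𝓞 F) F y)| := by
    intro y w
    rw [logEmbedding_component, hmult w.1, Nat.cast_one, one_mul]
    have : w.1 ((y : 𝓞 F) : F) = |σ (Weq.symm w.1) (algebraMap (𝓞 F) F y)| := by
      conv_lhs => rw [show w.1 = W (Weq.symm w.1) from (Weq.apply_symm_apply w.1).symm]
      rw [hW_apply]
    rw [this]
  have hlogE : ∀ (x : (𝓞 F)ˣ) (n : Fin (d - 1) → ℤ),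
      (x = ∏ j, u j ^ n j ∨ x = -∏ j, u j ^ n j) →
      logEmbedding F (Additive.ofMul x)
        = ∑ j, (n j : ℝ) • logEmbedding F (Additive.ofMul (u j)) := by
    intro x n hx
    have habs : ∀ k, |σ k (algebraMap (𝓞 F) F x)|
        = |σ k (algebraMap (𝓞 F) F ((∏ j, u j ^ n j : (𝓞 F)ˣ) : 𝓞 F))| := by
      rcases hx with rfl | rfl
      · intro k; rfl
      · intro k
        rw [show (((-∏ j, u j ^ n j : (𝓞 F)ˣ)) : 𝓞 F)
            = -((∏ j, u j ^ n j : (𝓞 F)ˣ) : 𝓞 F) from Units.val_neg _, map_neg, map_neg, abs_neg]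
    funext w
    rw [Finset.sum_apply, hcomp0 x w, habs (Weq.symm w.1), L1 (Weq.symm w.1) n]
    refine Finset.sum_congr rfl fun j _ => ?_
    rw [Pi.smul_apply, hcomp0 (u j) w, smul_eq_mul, hv_def]
  -- Step F : linear independence
  have hspan : ⊤ ≤ Submodule.span ℝ
      (Set.range fun j => logEmbedding F (Additive.ofMul (u j))) := by
    rw [← unitLattice_span_eq_top F, Submodule.span_le]
    rintro y ⟨x, -, rfl⟩
    obtain ⟨n, hn⟩ := hfund x.toMul
    have hx : (logEmbedding F).toIntLinearMap x
        = ∑ j, (n j : ℝ) • logEmbedding F (Additive.ofMul (u j)) := hlogE x.toMul n hn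
    rw [SetLike.mem_coe, hx]
    exact Submodule.sum_mem _ fun j _ =>
      Submodule.smul_mem _ _ (Submodule.subset_span ⟨j, rfl⟩)
  have hlE_li : LinearIndependent ℝ (fun j => logEmbedding F (Additive.ofMul (u j))) := by
    refine linearIndependent_of_top_le_span_of_card_eq_finrank hspan ?_
    rw [Fintype.card_fin, NumberField.Units.finrank_eq_rank, NumberField.Units.rank, hcardP]
  have hv_li : LinearIndependent ℝ v := by
    have hcomp : (fun j => logEmbedding F (Additive.ofMul (u j))) =
        (LinearMap.funLeft ℝ ℝ
          (fun w : {w : InfinitePlace F // w ≠ w₀} => Weq.symm w.1)) ∘ v := by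
      funext j
      funext w
      rw [Function.comp_apply, LinearMap.funLeft_apply, hcomp0 (u j) w, hv_def]
    exact LinearIndependent.of_comp _ (hcomp ▸ hlE_li)
  -- Step G : the basis
  set G : Fin (d - 1) ⊕ Unit → Fin d → ℝ :=
    Sum.elim v (fun _ _ => (1 : ℝ)) with hG_def
  have hd' : (0 : ℝ) < d := by exact_mod_cast hd
  have hG_li : LinearIndependent ℝ G := by
    rw [Fintype.linearIndependent_iff]
    intro c hc
    have h3 : ∀ k, ∑ i, c i * G i k = 0 := by
      intro k
      have := congrFun hc k
      simpa [Finset.sum_apply] using this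
    have h4 : ∑ i, c i * (∑ k, G i k) = 0 := by
      simp_rw [Finset.mul_sum]
      rw [Finset.sum_comm]
      rw [Finset.sum_congr rfl (fun k _ => h3 k), Finset.sum_const, smul_zero]
    rw [Fintype.sum_sum_type] at h4
    have h5 : ∀ j, ∑ k, G (Sum.inl j) k = 0 := fun j => by
      simpa [hG_def] using hvsum j
    rw [Finset.sum_congr rfl (fun j _ => by rw [h5 j, mul_zero]), Finset.sum_const_zero,
      zero_add] at h4
    have h6 : ∑ k : Fin d, G (Sum.inr ()) k = (d : ℝ) := by
      simp [hG_def]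
    have h7 : c (Sum.inr ()) = 0 := by
      have h8 : c (Sum.inr ()) * (d : ℝ) = 0 := by
        simpa [h6] using h4
      rcases mul_eq_zero.mp h8 with h | h
      · exact h
      · exact absurd h hd'.ne'
    have h9 : ∑ j, c (Sum.inl j) • v j = 0 := by
      have h10 := hc
      rw [Fintype.sum_sum_type] at h10
      simpa [hG_def, h7] using h10
    intro i
    rcases i with j | u'
    · exact (Fintype.linearIndependent_iff.mp hv_li _ h9) j
    · cases u'; exact h7
  have hcardG : Fintype.card (Fin (d - 1) ⊕ Unit) = Module.finrank ℝ (Fin d → ℝ) := by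
    simp only [Fintype.card_sum, Fintype.card_fin, Fintype.card_unit,
      Module.finrank_fintype_fun_eq_card]
    omega
  let B := basisOfLinearIndependentOfCardEqFinrank hG_li hcardG
  have hB : ⇑B = G := coe_basisOfLinearIndependentOfCardEqFinrank _ _
  -- Step H : the main argument
  intro t ht
  set c : Fin (d - 1) ⊕ Unit → ℝ := fun i => B.repr t i with hc_def
  have hsumrep : ∑ i, c i • G i = t := by
    conv_rhs => rw [← B.sum_repr t]
    rw [hB]
  have ht_eq : ∀ k, t k = (∑ j, c (Sum.inl j) * v j k) + c (Sum.inr ()) := by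
    intro k
    have h2 := congrFun hsumrep k
    rw [Finset.sum_apply, Fintype.sum_sum_type] at h2
    simp only [Pi.smul_apply, smul_eq_mul, hG_def, Sum.elim_inl, Sum.elim_inr] at h2
    rw [← h2]
    simp
  have hc0 : |c (Sum.inr ())| < Real.log δ₀ := by
    have hsum_t : ∑ k, t k = (d : ℝ) * c (Sum.inr ()) := by
      rw [Finset.sum_congr rfl fun k _ => ht_eq k, Finset.sum_add_distrib, Finset.sum_comm]
      have h11 : ∀ j, ∑ k, c (Sum.inl j) * v j k = 0 := fun j => by
        rw [← Finset.mul_sum, hvsum j, mul_zero]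
      rw [Finset.sum_congr rfl fun j _ => h11 j, Finset.sum_const_zero, zero_add,
        Finset.sum_const, Finset.card_univ, Fintype.card_fin, nsmul_eq_mul]
    have h12 : (d : ℝ) * |c (Sum.inr ())| < Real.log δ₀ := by
      calc (d : ℝ) * |c (Sum.inr ())| = |∑ k, t k| := by
            rw [hsum_t, abs_mul, abs_of_pos hd']
        _ < Real.log δ₀ := ht
    calc |c (Sum.inr ())| ≤ (d : ℝ) * |c (Sum.inr ())| :=
          le_mul_of_one_le_left (abs_nonneg _) (by exact_mod_cast hd)
      _ < Real.log δ₀ := h12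
  refine ⟨∏ j, u j ^ (round (c (Sum.inl j)) : ℤ), fun k => ?_⟩
  rw [L1 k (fun j => round (c (Sum.inl j)))]
  have hmax_pos : ∀ j, (0 : ℝ) < max |σ k (algebraMap (𝓞 F) F (u j))|
      |σ k (algebraMap (𝓞 F) F (u j))|⁻¹ :=
    fun j => lt_of_lt_of_le (abs_pos.mpr (hσ_ne k (u j))) (le_max_left _ _)
  have hlogδ : Real.log (δ k) = Real.log δ₀ + (1 / 2) * ∑ j,
      Real.log (max |σ k (algebraMap (𝓞 F) F (u j))| |σ k (algebraMap (𝓞 F) F (u j))|⁻¹) := by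
    rw [hδ k, Real.log_mul (by positivity) (by
      refine (Real.sqrt_pos.mpr ?_).ne'
      exact Finset.prod_pos fun j _ => hmax_pos j),
      Real.log_sqrt (Finset.prod_nonneg fun j _ => (hmax_pos j).le),
      Real.log_prod (fun j _ => (hmax_pos j).ne')]
    ring
  have habslog : ∀ j, |v j k| = Real.log (max |σ k (algebraMap (𝓞 F) F (u j))|
      |σ k (algebraMap (𝓞 F) F (u j))|⁻¹) :=
    fun j => abs_log_eq_log_max (abs_pos.mpr (hσ_ne k (u j)))
  have hstep : ∑ j, ((round (c (Sum.inl j)) : ℤ) : ℝ) * v j k - t k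
      = (∑ j, (((round (c (Sum.inl j)) : ℤ) : ℝ) - c (Sum.inl j)) * v j k)
        - c (Sum.inr ()) := by
    have h13 : ∑ j, (((round (c (Sum.inl j)) : ℤ) : ℝ) - c (Sum.inl j)) * v j k
        = ∑ j, ((round (c (Sum.inl j)) : ℤ) : ℝ) * v j k - ∑ j, c (Sum.inl j) * v j k := by
      rw [← Finset.sum_sub_distrib]
      exact Finset.sum_congr rfl fun j _ => by ring
    rw [ht_eq k, h13]
    ring
  calc |∑ j, ((round (c (Sum.inl j)) : ℤ) : ℝ) * v j k - t k|
      = |(∑ j, (((round (c (Sum.inl j)) : ℤ) : ℝ) - c (Sum.inl j)) * v j k)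
          - c (Sum.inr ())| := by rw [hstep]
    _ ≤ |∑ j, (((round (c (Sum.inl j)) : ℤ) : ℝ) - c (Sum.inl j)) * v j k|
          + |c (Sum.inr ())| := abs_sub _ _
    _ ≤ (∑ j, |(((round (c (Sum.inl j)) : ℤ) : ℝ) - c (Sum.inl j)) * v j k|)
          + |c (Sum.inr ())| :=
        add_le_add (Finset.abs_sum_le_sum_abs _ _) le_rfl
    _ ≤ (∑ j, (1 / 2) * |v j k|) + Real.log δ₀ := by
        refine add_le_add (Finset.sum_le_sum fun j _ => ?_) hc0.le
        rw [abs_mul]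
        refine mul_le_mul_of_nonneg_right ?_ (abs_nonneg _)
        rw [abs_sub_comm]
        exact abs_sub_round (c (Sum.inl j))
    _ = Real.log δ₀ + (1 / 2) * ∑ j, |v j k| := by
        rw [Finset.mul_sum]; ring
    _ = Real.log (δ k) := by
        rw [hlogδ, Finset.sum_congr rfl fun j _ => habslog j]
end
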